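/- arXiv:1904.12506 — 5 statements merged into one kernel-verified Lean document; each statement's English description precedes it below -/
import Mathlib

section
/- Let m > n > 1 be integers. For k ∈ ℕ let A_k = {x ∈ ℝ : D_{m^k}(x) ⊄ D_{n^k}(x)}. Suppose μ is a Borel probability measure on [0,1] that is pointwise generic under T_n for a continuous (non-atomic) measure ρ. Then for μ-almost every x, the set {k ∈ ℕ : x ∈ A_k} has natural density zero. -/
open MeasureTheory Filter Set Topology
open scoped ENNReal

/-- `T_n x = n x mod 1` as a self-map of `[0,1) ⊆ ℝ`. -/
noncomputable def Tmap (n : ℕ) (x : ℝ) : ℝ := Int.fract (n * x)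

/-- `μ` is pointwise generic for `ρ` under `T`. -/
def PointwiseGeneric (μ : Measure ℝ) (T : ℝ → ℝ) (ρ : Measure ℝ) : Prop :=
  ∀ᵐ x ∂μ, ∀ f : BoundedContinuousFunction ℝ ℝ,
    Tendsto (fun N : ℕ => (1 / N : ℝ) * ∑ k ∈ Finset.range N, f (T^[k] x)) atTop
      (𝓝 (∫ y, f y ∂ρ))

open Classical in
/-- A set of natural numbers has natural density zero. -/
def HasDensityZero (S : Set ℕ) : Prop :=
  Tendsto (fun N : ℕ => (((Finset.Icc 1 N).filter (fun k => k ∈ S)).card : ℝ) / N)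
    atTop (𝓝 0)

/-- The cell `D_q(x) = [⌊qx⌋/q, (⌊qx⌋+1)/q)` of the partition `D_q` of `ℝ` containing `x`. -/
noncomputable def Dcell (q : ℕ) (x : ℝ) : Set ℝ :=
  Set.Ico ((⌊(q : ℝ) * x⌋ : ℝ) / q) (((⌊(q : ℝ) * x⌋ : ℝ) + 1) / q)

lemma fract_iterate (n : ℕ) (x : ℝ) (hx : x ∈ Set.Ico (0:ℝ) 1) (k : ℕ) :
    (Tmap n)^[k] x = Int.fract ((n:ℝ)^k * x) := by
  induction k with
  | zero => simp [Int.fract_eq_self.2 ⟨hx.1, hx.2⟩]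
  | succ k ih =>
    rw [Function.iterate_succ_apply', ih, Tmap]
    have h1 : (n:ℝ) * Int.fract ((n:ℝ)^k * x)
        = (n:ℝ)^(k+1) * x - ((n * ⌊(n:ℝ)^k * x⌋ : ℤ) : ℝ) := by
      rw [Int.fract]
      push_cast
      ring
    rw [h1, Int.fract_sub_intCast]

lemma bad_cell (m n : ℕ) (hm : 0 < m) (hn : 0 < n) (x : ℝ)
    (h : ¬ Dcell m x ⊆ Dcell n x) :
    Int.fract ((n:ℝ) * x) < (n:ℝ)/(m:ℝ) ∨ 1 - (n:ℝ)/(m:ℝ) < Int.fract ((n:ℝ) * x) := by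
  obtain ⟨y, hy1, hy2⟩ := not_subset.1 h
  have hM : (0:ℝ) < m := by exact_mod_cast hm
  have hN : (0:ℝ) < n := by exact_mod_cast hn
  set a : ℝ := (⌊(m:ℝ) * x⌋ : ℝ) with ha
  set b : ℝ := (⌊(n:ℝ) * x⌋ : ℝ) with hb
  have hax : a ≤ m * x := Int.floor_le _
  have hax' : m * x < a + 1 := Int.lt_floor_add_one _
  have hbx : b ≤ n * x := Int.floor_le _
  have hbx' : n * x < b + 1 := Int.lt_floor_add_one _
  have hy1l : a / m ≤ y := hy1.1
  have hy1r : y < (a + 1) / m := hy1.2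
  have hfr : Int.fract ((n:ℝ) * x) = n * x - b := by rw [Int.fract, hb]
  rw [hfr]
  simp only [Dcell, Set.mem_Ico, not_and_or, not_le, not_lt] at hy2
  have hy1l' : a ≤ y * m := by rwa [div_le_iff₀ hM] at hy1l
  have hy1r' : y * m < a + 1 := by rwa [lt_div_iff₀ hM] at hy1r
  have hcancel : (n:ℝ)/m * m = n := div_mul_cancel₀ _ hM.ne'
  rcases hy2 with h2 | h2
  · left
    have h2' : y * n < b := by rwa [lt_div_iff₀ hN] at h2
    nlinarith [mul_lt_mul_of_pos_right h2' hM, mul_le_mul_of_nonneg_right hy1l' hN.le,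
      mul_lt_mul_of_pos_right hax' hN]
  · right
    have h2' : b + 1 ≤ y * n := by rwa [div_le_iff₀ hN] at h2
    nlinarith [mul_le_mul_of_nonneg_right h2' hM.le, mul_lt_mul_of_pos_right hy1r' hN,
      mul_le_mul_of_nonneg_right hax hN.le]

noncomputable def bump (ε c y : ℝ) : ℝ := max 0 (min 1 (2 - |y - c|/ε))

lemma bump_nonneg (ε c y : ℝ) : 0 ≤ bump ε c y := le_max_left _ _

lemma bump_le_one (ε c y : ℝ) : bump ε c y ≤ 1 :=
  max_le zero_le_one (min_le_left _ _)

lemma bump_continuous (ε c : ℝ) : Continuous (bump ε c) := by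
  unfold bump
  fun_prop

lemma bump_eq_one (ε c y : ℝ) (hε : 0 < ε) (h : |y - c| ≤ ε) : bump ε c y = 1 := by
  have h1 : |y - c|/ε ≤ 1 := (div_le_one hε).2 h
  have : (1:ℝ) ≤ 2 - |y - c|/ε := by linarith
  unfold bump
  rw [min_eq_left this, max_eq_right zero_le_one]

lemma bump_le_indicator (ε c : ℝ) (hε : 0 < ε) (y : ℝ) :
    bump ε c y ≤ Set.indicator (Set.Icc (c - 2*ε) (c + 2*ε)) (fun _ => (1:ℝ)) y := by
  by_cases h : y ∈ Set.Icc (c - 2*ε) (c + 2*ε)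
  · rw [Set.indicator_of_mem h]; exact bump_le_one _ _ _
  · rw [Set.indicator_of_notMem h]
    have h' : 2*ε < |y - c| := by
      rw [Set.mem_Icc, not_and_or, not_le, not_le] at h
      rcases h with h | h
      · rw [abs_sub_comm, abs_of_pos (by linarith)]; linarith
      · rw [abs_of_pos (by linarith)]; linarith
    have : 2 - |y - c|/ε ≤ 0 := by
      rw [sub_nonpos, le_div_iff₀ hε]; linarith
    unfold bump
    exact le_of_eq (max_eq_left (le_trans (min_le_right _ _) this))

lemma integral_bump_le (ρ : Measure ℝ) [IsProbabilityMeasure ρ] (ε c : ℝ) (hε : 0 < ε) :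
    ∫ y, bump ε c y ∂ρ ≤ (ρ (Set.Icc (c - 2*ε) (c + 2*ε))).toReal := by
  have hint : Integrable (bump ε c) ρ := by
    refine Integrable.mono' (integrable_const 1) ((bump_continuous ε c).aestronglyMeasurable) ?_
    filter_upwards with y
    rw [Real.norm_eq_abs, abs_of_nonneg (bump_nonneg _ _ _)]
    exact bump_le_one _ _ _
  have hind : Integrable (Set.indicator (Set.Icc (c - 2*ε) (c + 2*ε)) (fun _ => (1:ℝ))) ρ :=
    (integrable_const 1).indicator measurableSet_Icc
  calc ∫ y, bump ε c y ∂ρ ≤ ∫ y, Set.indicator (Set.Icc (c - 2*ε) (c + 2*ε)) (fun _ => (1:ℝ)) y ∂ρ :=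
        integral_mono hint hind (bump_le_indicator ε c hε)
    _ = (ρ (Set.Icc (c - 2*ε) (c + 2*ε))).toReal := by
        rw [integral_indicator_const _ measurableSet_Icc]; simp; rfl

lemma measure_Icc_small (ρ : Measure ℝ) [IsProbabilityMeasure ρ] (c : ℝ) (hc : ρ {c} = 0)
    {δ : ℝ≥0∞} (hδ : 0 < δ) : ∃ ε : ℝ, 0 < ε ∧ ρ (Set.Icc (c - 2*ε) (c + 2*ε)) < δ := by
  set s : ℕ → Set ℝ := fun j => Set.Icc (c - 2*(1/(j+1))) (c + 2*(1/(j+1))) with hs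
  have htend0 : Tendsto (fun j : ℕ => 2*(1/((j:ℝ)+1))) atTop (𝓝 0) := by
    simpa using (tendsto_one_div_add_atTop_nhds_zero_nat (𝕜 := ℝ)).const_mul 2
  have hiInter : ⋂ j, s j = {c} := by
    ext z
    simp only [hs, Set.mem_iInter, Set.mem_Icc, Set.mem_singleton_iff]
    constructor
    · intro h
      have habs : ∀ j : ℕ, |z - c| ≤ 2*(1/((j:ℝ)+1)) := by
        intro j
        rw [abs_le]
        constructor <;> linarith [(h j).1, (h j).2]
      have : |z - c| ≤ 0 := ge_of_tendsto' htend0 habs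
      have := abs_nonneg (z - c)
      have hz : |z - c| = 0 := le_antisymm ‹_› ‹_›
      rw [abs_eq_zero, sub_eq_zero] at hz
      exact hz
    · rintro rfl
      intro j
      have : (0:ℝ) ≤ 2*(1/((j:ℝ)+1)) := by positivity
      constructor <;> linarith
  have hmono : Antitone s := by
    intro i j hij
    have hij' : (i:ℝ) ≤ j := by exact_mod_cast hij
    have hji : (1:ℝ)/((j:ℝ)+1) ≤ 1/((i:ℝ)+1) :=
      one_div_le_one_div_of_le (by linarith) (by linarith)
    exact Set.Icc_subset_Icc (by linarith) (by linarith)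
  have htend : Tendsto (ρ ∘ s) atTop (𝓝 (ρ {c})) := by
    rw [← hiInter]
    exact tendsto_measure_iInter_atTop
      (fun j => (measurableSet_Icc).nullMeasurableSet) hmono ⟨0, measure_ne_top ρ _⟩
  rw [hc] at htend
  obtain ⟨j, hj⟩ := (htend.eventually_lt_const hδ).exists
  exact ⟨1/(j+1), by positivity, hj⟩

lemma Dcell_one (q : ℕ) (hq : 0 < q) : Dcell q 1 = Set.Ico (1:ℝ) (1 + 1/q) := by
  have hq' : (0:ℝ) < q := by exact_mod_cast hq
  have : ⌊(q:ℝ) * 1⌋ = (q:ℤ) := by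
    rw [mul_one]
    exact_mod_cast Int.floor_natCast q
  rw [Dcell, this]
  push_cast
  rw [div_self hq'.ne', add_div, div_self hq'.ne']


/-- Claim 2.8 of the paper.  Let `m > n > 1`, and for `k ∈ ℕ` let
`A_k = {x : D_{m^k}(x) ⊄ D_{n^k}(x)}`.  If `μ` is a probability measure on `[0,1]`
pointwise generic under `T_n` for a continuous measure `ρ`, then for `μ`-a.e. `x` the
set of `k` with `x ∈ A_k` has density zero. -/
theorem density_zero_of_bad_cells
    (m n : ℕ) (hn : 1 < n) (hnm : n < m)
    (A : ℕ → Set ℝ) (hA : ∀ k, A k = {x : ℝ | ¬ Dcell (m ^ k) x ⊆ Dcell (n ^ k) x})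
    (μ : Measure ℝ) [IsProbabilityMeasure μ] (hμsupp : μ (Set.Icc (0:ℝ) 1)ᶜ = 0)
    (ρ : Measure ℝ) [IsProbabilityMeasure ρ] (hρcont : ∀ y : ℝ, ρ {y} = 0)
    (hgen : PointwiseGeneric μ (Tmap n) ρ) :
    ∀ᵐ x ∂μ, HasDensityZero {k : ℕ | x ∈ A k} := by
  classical
  have hm1 : 1 < m := hn.trans hnm
  have haeIcc : ∀ᵐ x ∂μ, x ∈ Set.Icc (0:ℝ) 1 := by
    rw [ae_iff]
    convert hμsupp using 2
    rfl
  filter_upwards [hgen, haeIcc] with x hxgen hxIcc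
  by_cases hx1 : x = 1
  · -- x = 1 : no k is bad
    have hempty : ∀ k, x ∉ A k := by
      intro k hxA
      rw [hA k] at hxA
      apply hxA
      subst hx1
      rw [Dcell_one (m^k) (pow_pos (by omega) k), Dcell_one (n^k) (pow_pos (by omega) k)]
      apply Set.Ico_subset_Ico le_rfl
      have h1 : (0:ℝ) < (n:ℝ)^k := by positivity
      have h2 : ((n:ℝ))^k ≤ (m:ℝ)^k :=
        pow_le_pow_left₀ (by positivity) (by exact_mod_cast hnm.le) k
      have := one_div_le_one_div_of_le h1 h2
      push_cast
      linarith
    have hzero : ∀ N : ℕ, ((Finset.Icc 1 N).filter (fun k => k ∈ {k : ℕ | x ∈ A k})).card = 0 := by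
      intro N
      rw [Finset.card_eq_zero, Finset.filter_eq_empty_iff]
      intro k _
      exact hempty k
    unfold HasDensityZero
    have : (fun N : ℕ => (((Finset.Icc 1 N).filter (fun k => k ∈ {k : ℕ | x ∈ A k})).card : ℝ) / N)
        = fun _ => (0:ℝ) := by
      funext N
      rw [hzero N]
      simp
    rw [this]
    exact tendsto_const_nhds
  · have hx01 : x ∈ Set.Ico (0:ℝ) 1 := ⟨hxIcc.1, lt_of_le_of_ne hxIcc.2 hx1⟩
    unfold HasDensityZero
    rw [NormedAddCommGroup.tendsto_nhds_zero]
    intro c hc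
    obtain ⟨ε₀, hε₀, hρ0⟩ := measure_Icc_small ρ 0 (hρcont 0)
      (δ := ENNReal.ofReal (c/4)) (ENNReal.ofReal_pos.2 (by linarith))
    obtain ⟨ε₁, hε₁, hρ1⟩ := measure_Icc_small ρ 1 (hρcont 1)
      (δ := ENNReal.ofReal (c/4)) (ENNReal.ofReal_pos.2 (by linarith))
    set ε := min ε₀ ε₁ with hεdef
    have hεpos : 0 < ε := lt_min hε₀ hε₁
    -- the bounded continuous test function
    set F : BoundedContinuousFunction ℝ ℝ :=
      BoundedContinuousFunction.ofNormedAddCommGroup (fun y => bump ε 0 y + bump ε 1 y)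
        ((bump_continuous ε 0).add (bump_continuous ε 1)) 2
        (fun y => by
          rw [Real.norm_eq_abs,
            abs_of_nonneg (add_nonneg (bump_nonneg ε 0 y) (bump_nonneg ε 1 y))]
          have := bump_le_one ε 0 y
          have := bump_le_one ε 1 y
          linarith) with hFdef
    have hFeval : ∀ y, F y = bump ε 0 y + bump ε 1 y := fun y => rfl
    have hFnonneg : ∀ y, 0 ≤ F y := fun y => by
      rw [hFeval]; exact add_nonneg (bump_nonneg ε 0 y) (bump_nonneg ε 1 y)
    -- integral bound
    have hI0 : (ρ (Set.Icc (0 - 2*ε) (0 + 2*ε))).toReal < c/4 := by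
      have hle : ρ (Set.Icc (0 - 2*ε) (0 + 2*ε)) < ENNReal.ofReal (c/4) :=
        lt_of_le_of_lt (measure_mono (Set.Icc_subset_Icc
          (by linarith [min_le_left ε₀ ε₁]) (by linarith [min_le_left ε₀ ε₁]))) hρ0
      exact (ENNReal.lt_ofReal_iff_toReal_lt (measure_ne_top ρ _)).1 hle
    have hI1 : (ρ (Set.Icc (1 - 2*ε) (1 + 2*ε))).toReal < c/4 := by
      have hle : ρ (Set.Icc (1 - 2*ε) (1 + 2*ε)) < ENNReal.ofReal (c/4) :=
        lt_of_le_of_lt (measure_mono (Set.Icc_subset_Icc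
          (by linarith [min_le_right ε₀ ε₁]) (by linarith [min_le_right ε₀ ε₁]))) hρ1
      exact (ENNReal.lt_ofReal_iff_toReal_lt (measure_ne_top ρ _)).1 hle
    have hFint : ∀ (d : ℝ), Integrable (bump ε d) ρ := by
      intro d
      refine Integrable.mono' (integrable_const 1)
        ((bump_continuous ε d).aestronglyMeasurable) ?_
      filter_upwards with y
      rw [Real.norm_eq_abs, abs_of_nonneg (bump_nonneg _ _ _)]
      exact bump_le_one _ _ _
    have hL : ∫ y, F y ∂ρ < c/2 := by
      have : ∫ y, F y ∂ρ = (∫ y, bump ε 0 y ∂ρ) + ∫ y, bump ε 1 y ∂ρ := by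
        simp only [hFeval]
        exact integral_add (hFint 0) (hFint 1)
      rw [this]
      have h0 := integral_bump_le ρ ε 0 hεpos
      have h1 := integral_bump_le ρ ε 1 hεpos
      linarith
    have hS := hxgen F
    -- choose K
    have hr0 : (0:ℝ) ≤ (n:ℝ)/(m:ℝ) := by positivity
    have hr1 : (n:ℝ)/(m:ℝ) < 1 := by
      rw [div_lt_one (by exact_mod_cast (by omega : 0 < m))]
      exact_mod_cast hnm
    obtain ⟨K, hK⟩ : ∃ K : ℕ, ∀ k ≥ K, ((n:ℝ)/(m:ℝ))^k < ε := by
      have := (tendsto_pow_atTop_nhds_zero_of_lt_one hr0 hr1).eventually_lt_const hεpos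
      exact eventually_atTop.1 this
    -- key pointwise bound
    have hkey : ∀ k, K ≤ k → x ∈ A k → 1 ≤ F ((Tmap n)^[k] x) := by
      intro k hk hxA
      rw [fract_iterate n x hx01 k]
      rw [hA k] at hxA
      have hbad := bad_cell (m^k) (n^k) (pow_pos (by omega) k) (pow_pos (by omega) k) x hxA
      push_cast at hbad
      set y := Int.fract ((n:ℝ)^k * x) with hy
      have hy0 : 0 ≤ y := Int.fract_nonneg _
      have hy1 : y < 1 := Int.fract_lt_one _
      have hrk : (n:ℝ)^k/(m:ℝ)^k < ε := by
        rw [← div_pow]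
        exact hK k hk
      rw [hFeval]
      rcases hbad with h | h
      · have h1 : bump ε 0 y = 1 := bump_eq_one ε 0 y hεpos
          (by rw [sub_zero, abs_of_nonneg hy0]; linarith)
        linarith [bump_nonneg ε 1 y]
      · have h1 : bump ε 1 y = 1 := bump_eq_one ε 1 y hεpos
          (by rw [abs_of_nonpos (by linarith)]; linarith)
        linarith [bump_nonneg ε 0 y]
    -- cardinality bound
    have hcard : ∀ N : ℕ, (((Finset.Icc 1 N).filter (fun k => k ∈ {k : ℕ | x ∈ A k})).card : ℝ)
        ≤ (K:ℝ) + ∑ j ∈ Finset.range (N+1), F ((Tmap n)^[j] x) := by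
      intro N
      set s := (Finset.Icc 1 N).filter (fun k => k ∈ {k : ℕ | x ∈ A k}) with hsdef
      set t := s.filter (fun k => K ≤ k) with htdef
      have hsplit : s ⊆ Finset.range K ∪ t := by
        intro k hk
        by_cases h : k < K
        · exact Finset.mem_union_left _ (Finset.mem_range.2 h)
        · exact Finset.mem_union_right _ (Finset.mem_filter.2 ⟨hk, not_lt.1 h⟩)
      have h1 : s.card ≤ K + t.card := by
        calc s.card ≤ (Finset.range K ∪ t).card := Finset.card_le_card hsplit
          _ ≤ (Finset.range K).card + t.card := Finset.card_union_le _ _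
          _ = K + t.card := by rw [Finset.card_range]
      have h2 : (t.card : ℝ) ≤ ∑ j ∈ Finset.range (N+1), F ((Tmap n)^[j] x) := by
        have e1 : (t.card : ℝ) = ∑ j ∈ t, (1:ℝ) := by
          rw [Finset.sum_const]
          simp
        rw [e1]
        refine le_trans (Finset.sum_le_sum ?_) (Finset.sum_le_sum_of_subset_of_nonneg ?_ ?_)
        · intro k hk
          have hk' := Finset.mem_filter.1 hk
          have hkA := (Finset.mem_filter.1 hk'.1).2
          exact hkey k hk'.2 hkA
        · intro k hk
          have hk' := Finset.mem_filter.1 hk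
          have := (Finset.mem_Icc.1 (Finset.mem_filter.1 hk'.1).1).2
          exact Finset.mem_range.2 (by omega)
        · intro j _ _
          exact hFnonneg _
      calc ((s.card : ℕ) : ℝ) ≤ ((K + t.card : ℕ) : ℝ) := by exact_mod_cast h1
        _ = (K:ℝ) + (t.card : ℝ) := by push_cast; ring
        _ ≤ (K:ℝ) + ∑ j ∈ Finset.range (N+1), F ((Tmap n)^[j] x) := by linarith
    -- the comparison sequence tends to ∫ F dρ
    have htendK : Tendsto (fun N : ℕ => (K:ℝ)/N) atTop (𝓝 0) :=
      tendsto_const_div_atTop_nhds_zero_nat (𝕜 := ℝ) K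
    have htendS : Tendsto
        (fun N : ℕ => (1/(N:ℝ)) * ∑ j ∈ Finset.range (N+1), F ((Tmap n)^[j] x)) atTop
        (𝓝 (∫ y, F y ∂ρ)) := by
      have heq : (fun N : ℕ => (1/(N:ℝ)) * ∑ j ∈ Finset.range (N+1), F ((Tmap n)^[j] x))
          = fun N : ℕ => (((N:ℝ)+1)/N) *
            ((1/((N:ℝ)+1)) * ∑ j ∈ Finset.range (N+1), F ((Tmap n)^[j] x)) := by
        funext N
        rcases Nat.eq_zero_or_pos N with h | h
        · subst h; simp
        · have hN : (0:ℝ) < N := by exact_mod_cast h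
          field_simp
      rw [heq]
      have hA1 : Tendsto (fun N : ℕ => ((N:ℝ)+1)/N) atTop (𝓝 1) := by
        have : (fun N : ℕ => ((N:ℝ)+1)/N) =ᶠ[atTop] fun N : ℕ => 1 + 1/N := by
          filter_upwards [eventually_ge_atTop 1] with N hN
          have hN' : (0:ℝ) < N := by exact_mod_cast hN
          field_simp
        rw [tendsto_congr' this]
        have := tendsto_one_div_atTop_nhds_zero_nat (𝕜 := ℝ)
        simpa using (tendsto_const_nhds (x := (1:ℝ)) (f := atTop)).add this
      have hA2 : Tendsto
          (fun N : ℕ => (1/((N:ℝ)+1)) * ∑ j ∈ Finset.range (N+1), F ((Tmap n)^[j] x)) atTop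
          (𝓝 (∫ y, F y ∂ρ)) := by
        refine (hS.comp (tendsto_add_atTop_nat 1)).congr (fun N => ?_)
        simp only [Function.comp]
        push_cast
        ring_nf
      simpa using hA1.mul hA2
    have htendB : Tendsto (fun N : ℕ => (K:ℝ)/N +
        (1/(N:ℝ)) * ∑ j ∈ Finset.range (N+1), F ((Tmap n)^[j] x)) atTop
        (𝓝 (0 + ∫ y, F y ∂ρ)) := htendK.add htendS
    rw [zero_add] at htendB
    have hev := htendB.eventually_lt_const (show ∫ y, F y ∂ρ < c by linarith)
    filter_upwards [hev, eventually_ge_atTop 1] with N hN hN1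
    have hNpos : (0:ℝ) < N := by exact_mod_cast hN1
    have hfrac : (((Finset.Icc 1 N).filter (fun k => k ∈ {k : ℕ | x ∈ A k})).card : ℝ) / N
        ≤ (K:ℝ)/N + (1/(N:ℝ)) * ∑ j ∈ Finset.range (N+1), F ((Tmap n)^[j] x) := by
      calc (((Finset.Icc 1 N).filter (fun k => k ∈ {k : ℕ | x ∈ A k})).card : ℝ) / N
          ≤ ((K:ℝ) + ∑ j ∈ Finset.range (N+1), F ((Tmap n)^[j] x)) / N := by
            gcongr
            exact hcard N
        _ = (K:ℝ)/N + (1/(N:ℝ)) * ∑ j ∈ Finset.range (N+1), F ((Tmap n)^[j] x) := by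
            field_simp
    rw [Real.norm_eq_abs, abs_of_nonneg (by positivity)]
    exact lt_of_le_of_lt hfrac hN
end

section
/- Let m > n > 1 be integers. Let x ∈ [0,1] be a point that equidistributes under T_n for a continuous (non-atomic) measure ρ, and let D ⊆ [0,1] be an interval. Then the set of k ∈ ℕ such that T_n^k x lies outside the closure of D but dist(T_n^k x, ∂D) ≤ (n/m)^k has natural density zero. -/
open MeasureTheory Filter Set Topology
open scoped ENNReal

/-- Lemma 2.9 of the paper.  Let `m > n > 1` and let `x ∈ [0,1]`
equidistribute under `T_n` for a continuous measure `ρ`.  If `D ⊆ [0,1]` is a (nonempty)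
interval, then the set of `k` such that `T_n^k x` lies outside the closure of `D` but
within distance `(n/m)^k` of `∂D` has density zero. -/
theorem density_zero_of_near_boundary_times
    (m n : ℕ) (hn : 1 < n) (hnm : n < m)
    (ρ : Measure ℝ) [IsProbabilityMeasure ρ] (hρcont : ∀ y : ℝ, ρ {y} = 0)
    (x : ℝ) (hx : x ∈ Set.Icc (0:ℝ) 1)
    (hxgen : ∀ f : BoundedContinuousFunction ℝ ℝ,
      Tendsto (fun N : ℕ => (1 / N : ℝ) * ∑ k ∈ Finset.range N, f ((Tmap n)^[k] x)) atTop
        (𝓝 (∫ y, f y ∂ρ)))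
    (D : Set ℝ) (hD : D.OrdConnected) (hDne : D.Nonempty) (hDsub : D ⊆ Set.Icc (0:ℝ) 1) :
    HasDensityZero {k : ℕ | (Tmap n)^[k] x ∉ closure D ∧
      Metric.infDist ((Tmap n)^[k] x) (frontier D) ≤ ((n : ℝ) / m) ^ k} := by
  classical
  set y : ℕ → ℝ := fun k => (Tmap n)^[k] x with hy
  set F := frontier D with hFdef
  -- basic facts about D and F
  have hbb : BddBelow D := ⟨0, fun z hz => (hDsub hz).1⟩
  have hba : BddAbove D := ⟨1, fun z hz => (hDsub hz).2⟩
  set a := sInf D with ha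
  set b := sSup D with hb
  have hDuniv : D ≠ univ := by
    intro h
    have : (2 : ℝ) ∈ D := h ▸ mem_univ _
    have := (hDsub this).2
    norm_num at this
  have hFne : F.Nonempty := nonempty_frontier_iff.mpr ⟨hDne, hDuniv⟩
  have hFclosed : IsClosed F := isClosed_frontier
  -- frontier D ⊆ {a, b}
  have hDab : D ⊆ Icc a b := fun w hw => ⟨csInf_le hbb hw, le_csSup hba hw⟩
  have hFsub : F ⊆ {a, b} := by
    intro z hz
    by_contra hzc
    simp only [mem_insert_iff, mem_singleton_iff, not_or] at hzc
    have hzcl : z ∈ closure D := frontier_subset_closure hz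
    have hzab : z ∈ Icc a b := by
      have : closure D ⊆ Icc a b := closure_minimal hDab isClosed_Icc
      exact this hzcl
    have h1 : a < z := lt_of_le_of_ne hzab.1 (Ne.symm hzc.1)
    have h2 : z < b := lt_of_le_of_ne hzab.2 hzc.2
    obtain ⟨d1, hd1D, hd1⟩ : ∃ d ∈ D, d < z := by
      by_contra h
      push_neg at h
      exact absurd (le_csInf hDne h) (not_le.2 h1)
    obtain ⟨d2, hd2D, hd2⟩ : ∃ d ∈ D, z < d := by
      by_contra h
      push_neg at h
      exact absurd (csSup_le hDne h) (not_le.2 h2)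
    have hsub : Ioo d1 d2 ⊆ D := fun w hw => hD.out hd1D hd2D ⟨hw.1.le, hw.2.le⟩
    have hzint : z ∈ interior D :=
      mem_interior.2 ⟨Ioo d1 d2, hsub, isOpen_Ioo, ⟨hd1, hd2⟩⟩
    exact hz.2 hzint
  have hρF : ρ F = 0 := by
    apply measure_mono_null hFsub
    have : ({a, b} : Set ℝ) = {a} ∪ {b} := by rw [Set.insert_eq]
    rw [this]
    refine le_antisymm ?_ zero_le
    calc ρ ({a} ∪ {b}) ≤ ρ {a} + ρ {b} := measure_union_le _ _
      _ = 0 := by rw [hρcont a, hρcont b, add_zero]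
  -- the ratio n/m
  have hmpos : (0:ℝ) < m := by exact_mod_cast Nat.lt_trans (Nat.lt_of_lt_of_le Nat.zero_lt_one hn.le) hnm
  have hnpos : (0:ℝ) < n := by exact_mod_cast Nat.lt_of_lt_of_le Nat.zero_lt_one hn.le
  have hr0 : (0:ℝ) < (n:ℝ) / m := div_pos hnpos hmpos
  have hr1 : (n:ℝ) / m < 1 := by
    rw [div_lt_one hmpos]
    exact_mod_cast hnm
  -- main argument
  rw [HasDensityZero, NormedAddCommGroup.tendsto_nhds_zero]
  intro δ hδ
  -- choose r > 0 with ρ(cthickening r F) < δ/8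
  have htend : Tendsto (fun r => ρ (Metric.cthickening r F)) (𝓝 0) (𝓝 0) := by
    have := tendsto_measure_cthickening_of_isClosed
      (μ := ρ) (s := F) ⟨1, one_pos, measure_ne_top ρ _⟩ hFclosed
    rwa [hρF] at this
  have hδ8 : (0:ℝ≥0∞) < ENNReal.ofReal (δ / 8) := by
    simp [ENNReal.ofReal_pos]; linarith
  obtain ⟨r, hrρ, hrpos⟩ :
      ∃ r : ℝ, ρ (Metric.cthickening r F) < ENNReal.ofReal (δ / 8) ∧ 0 < r := by
    have h1 : ∀ᶠ r in 𝓝[>] (0:ℝ), ρ (Metric.cthickening r F) < ENNReal.ofReal (δ / 8) :=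
      nhdsWithin_le_nhds (htend.eventually_lt_const hδ8)
    have h2 : ∀ᶠ r in 𝓝[>] (0:ℝ), (0:ℝ) < r := self_mem_nhdsWithin
    exact (h1.and h2).exists
  -- the bump function
  set g : ℝ → ℝ := fun z => max 0 (1 - Metric.infDist z F / r) with hg
  have hgc : Continuous g :=
    continuous_const.max (continuous_const.sub
      ((Metric.continuous_infDist_pt F).div_const r))
  have hg0 : ∀ z, 0 ≤ g z := fun z => le_max_left _ _
  have hg1 : ∀ z, g z ≤ 1 := by
    intro z
    apply max_le (by norm_num)
    have := Metric.infDist_nonneg (s := F) (x := z)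
    have : 0 ≤ Metric.infDist z F / r := by positivity
    linarith
  set f : BoundedContinuousFunction ℝ ℝ :=
    BoundedContinuousFunction.mkOfBound ⟨g, hgc⟩ 1 (by
      intro p q
      have := hg0 p; have := hg0 q; have := hg1 p; have := hg1 q
      rw [Real.dist_eq, abs_sub_le_iff]
      constructor <;> simp only [ContinuousMap.coe_mk] <;> linarith) with hf
  have hfval : ∀ z, f z = g z := fun z => rfl
  -- f vanishes outside cthickening r F
  have hout : ∀ z ∈ (Metric.cthickening r F)ᶜ, f z ≤ 0 := by
    intro z hz
    have hd : r < Metric.infDist z F := by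
      by_contra h
      push_neg at h
      apply hz
      rw [Metric.mem_cthickening_iff]
      have hne : EMetric.infEdist z F ≠ ⊤ := Metric.infEdist_ne_top hFne
      calc EMetric.infEdist z F = ENNReal.ofReal (Metric.infDist z F) := by
            rw [Metric.infDist]; exact (ENNReal.ofReal_toReal hne).symm
        _ ≤ ENNReal.ofReal r := ENNReal.ofReal_le_ofReal h
    rw [hfval]
    apply max_le le_rfl
    have : 1 < Metric.infDist z F / r := by
      rw [lt_div_iff₀ hrpos]; linarith
    linarith
  -- integral bound
  have hintf : ∫ z, f z ∂ρ < δ / 8 := by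
    have h1 : ENNReal.ofReal (∫ z, f z ∂ρ) ≤ ρ (Metric.cthickening r F) :=
      integral_le_measure (fun z _ => hg1 z) hout
    have h2 : ENNReal.ofReal (∫ z, f z ∂ρ) < ENNReal.ofReal (δ / 8) :=
      lt_of_le_of_lt h1 hrρ
    exact (ENNReal.ofReal_lt_ofReal_iff (by linarith)).1 h2
  -- equidistribution: eventually the averages are < δ/8
  have havg := (hxgen f).eventually_lt_const hintf
  obtain ⟨N₁, hN₁⟩ := eventually_atTop.1 havg
  -- choose K₀ with (n/m)^k ≤ r/2 for k ≥ K₀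
  have hpow : Tendsto (fun k : ℕ => ((n:ℝ)/m) ^ k) atTop (𝓝 0) :=
    tendsto_pow_atTop_nhds_zero_of_lt_one hr0.le hr1
  obtain ⟨K₀, hK₀⟩ := eventually_atTop.1 (hpow.eventually_le_const (by linarith : (0:ℝ) < r/2))
  -- counting lemma: points close to F contribute at least 1/2 to f
  have hhalf : ∀ z : ℝ, Metric.infDist z F ≤ r / 2 → (1:ℝ)/2 ≤ f z := by
    intro z hz
    rw [hfval]
    have h1 : Metric.infDist z F / r ≤ 1/2 := by
      rw [div_le_iff₀ hrpos]; linarith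
    calc (1:ℝ)/2 ≤ 1 - Metric.infDist z F / r := by linarith
      _ ≤ g z := le_max_right _ _
  set P : ℕ → Prop := fun k => Metric.infDist (y k) F ≤ r / 2 with hP
  have hcount : ∀ M : ℕ, (((Finset.range M).filter P).card : ℝ)
      ≤ 2 * ∑ k ∈ Finset.range M, f (y k) := by
    intro M
    have h1 : ∑ k ∈ (Finset.range M).filter P, ((1:ℝ)/2)
        ≤ ∑ k ∈ (Finset.range M).filter P, f (y k) :=
      Finset.sum_le_sum (fun k hk => hhalf _ (Finset.mem_filter.1 hk).2)
    have h2 : ∑ k ∈ (Finset.range M).filter P, f (y k)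
        ≤ ∑ k ∈ Finset.range M, f (y k) :=
      Finset.sum_le_sum_of_subset_of_nonneg (Finset.filter_subset _ _)
        (fun k _ _ => hg0 (y k))
    rw [Finset.sum_const, nsmul_eq_mul] at h1
    have := h1.trans h2
    linarith
  -- the set whose density we bound
  set S : Set ℕ := {k : ℕ | y k ∉ closure D ∧
      Metric.infDist (y k) F ≤ ((n : ℝ) / m) ^ k} with hS
  -- inclusion bound on cardinality
  have hcard : ∀ (N : ℕ) (inst : DecidablePred (fun k => k ∈ S)),
      (@Finset.filter _ (fun k => k ∈ S) inst (Finset.Icc 1 N)).card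
      ≤ K₀ + ((Finset.range (N+1)).filter P).card := by
    intro N inst
    have hsub : @Finset.filter _ (fun k => k ∈ S) inst (Finset.Icc 1 N)
        ⊆ Finset.range K₀ ∪ (Finset.range (N+1)).filter P := by
      intro k hk
      rw [Finset.mem_filter, Finset.mem_Icc] at hk
      rcases lt_or_ge k K₀ with h | h
      · exact Finset.mem_union_left _ (Finset.mem_range.2 h)
      · apply Finset.mem_union_right
        rw [Finset.mem_filter, Finset.mem_range]
        refine ⟨Nat.lt_succ_of_le hk.1.2, ?_⟩
        exact hk.2.2.trans (hK₀ k h)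
    calc (@Finset.filter _ (fun k => k ∈ S) inst (Finset.Icc 1 N)).card
        ≤ (Finset.range K₀ ∪ (Finset.range (N+1)).filter P).card :=
          Finset.card_le_card hsub
      _ ≤ (Finset.range K₀).card + ((Finset.range (N+1)).filter P).card :=
          Finset.card_union_le _ _
      _ = K₀ + ((Finset.range (N+1)).filter P).card := by rw [Finset.card_range]
  -- small K₀/N eventually
  have hK0small : ∀ᶠ N : ℕ in atTop, (K₀ : ℝ) / N < δ / 2 :=
    (tendsto_const_div_atTop_nhds_zero_nat (K₀ : ℝ)).eventually_lt_const (by linarith)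
  filter_upwards [eventually_ge_atTop N₁, eventually_ge_atTop 1, hK0small]
    with N hNN₁ hN1 hKN
  have hNpos : (0:ℝ) < N := by exact_mod_cast hN1
  have hM : (0:ℝ) < (N:ℝ) + 1 := by linarith
  -- bound on the sum at N+1
  have hsum : ∑ k ∈ Finset.range (N+1), f (y k) < ((N:ℝ) + 1) * (δ / 8) := by
    have h := hN₁ (N+1) (le_trans hNN₁ (Nat.le_succ N))
    have hcast : ((N+1 : ℕ) : ℝ) = (N:ℝ) + 1 := by push_cast; ring
    rw [hcast] at h
    have := mul_lt_mul_of_pos_left h hM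
    rw [← mul_assoc, mul_one_div, div_self hM.ne', one_mul] at this
    linarith
  have hsumnn : (0:ℝ) ≤ ∑ k ∈ Finset.range (N+1), f (y k) :=
    Finset.sum_nonneg (fun k _ => hg0 (y k))
  have hq := hcount (N+1)
  have hKN' : (K₀ : ℝ) < (δ / 2) * N := by
    rw [div_lt_iff₀ hNpos] at hKN
    linarith
  rw [Real.norm_eq_abs, abs_of_nonneg (by positivity)]
  rw [div_lt_iff₀ hNpos]
  have hN1R : (1:ℝ) ≤ (N:ℝ) := by exact_mod_cast hN1
  have harith : (K₀ : ℝ) + (((Finset.range (N+1)).filter P).card : ℝ) < δ * N := by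
    nlinarith [mul_nonneg hδ.le (by linarith : (0:ℝ) ≤ (N:ℝ) - 1)]
  refine lt_of_le_of_lt ?_ harith
  exact_mod_cast hcard N _
end

section
/- Let m > n > 1 be integers and let f, g be non-singular affine maps of ℝ. For k ∈ ℕ let A_k = {x ∈ ℝ : f^{-1}(D_{m^k}(f(x))) ⊄ g^{-1}(D_{n^k}(g(x)))}. Suppose μ is a Borel probability measure on [0,1] such that the pushforward gμ is pointwise generic under T_n for a continuous (non-atomic) measure ρ. Then for μ-almost every x, the set {k ∈ ℕ : x ∈ A_k} has natural density zero. -/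
open MeasureTheory Filter Set Topology
open scoped ENNReal

/- ### Auxiliary lemmas -/

lemma tmap_iterate (n : ℕ) (k : ℕ) (y : ℝ) :
    (Tmap n)^[k + 1] y = Int.fract ((n : ℝ) ^ (k+1) * y) := by
  induction k with
  | zero => simp [Tmap]
  | succ k ih =>
      rw [Function.iterate_succ_apply', ih, Tmap]
      have h : (n : ℝ) * Int.fract ((n:ℝ)^(k+1) * y)
          = (n:ℝ)^(k+1+1) * y - ((n * ⌊(n:ℝ)^(k+1) * y⌋ : ℤ) : ℝ) := by
        rw [Int.fract]; push_cast; ring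
      rw [h, Int.fract_sub_intCast]

lemma key_fract (m n : ℕ) (hn : 0 < n) (hm : 0 < m)
    (a b c d : ℝ) (ha : a ≠ 0) (hc : c ≠ 0) (k : ℕ) (x : ℝ)
    (hx : ¬ ((fun y => a*y+b) ⁻¹' Dcell (m ^ k) (a*x+b) ⊆
             (fun y => c*y+d) ⁻¹' Dcell (n ^ k) (c*x+d))) :
    Int.fract ((n:ℝ)^k * (c*x+d)) < |c|/|a| * ((n:ℝ)^k/(m:ℝ)^k) ∨
    1 - |c|/|a| * ((n:ℝ)^k/(m:ℝ)^k) < Int.fract ((n:ℝ)^k * (c*x+d)) := by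
  by_contra hcon
  push_neg at hcon
  obtain ⟨h1, h2⟩ := hcon
  apply hx
  intro y hy
  set M : ℝ := (m:ℝ)^k with hM
  set nk : ℝ := (n:ℝ)^k with hnk
  have hMpos : (0:ℝ) < M := pow_pos (by exact_mod_cast hm) k
  have hnkpos : (0:ℝ) < nk := pow_pos (by exact_mod_cast hn) k
  have hapos : 0 < |a| := abs_pos.mpr ha
  have hcpos : 0 < |c| := abs_pos.mpr hc
  set e : ℝ := |c|/|a| * (nk/M) with he
  have hepos : 0 < e :=
    mul_pos (div_pos hcpos hapos) (div_pos hnkpos hMpos)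
  set t : ℝ := nk * (c*x+d) with ht
  set s : ℝ := nk * (c*y+d) with hs
  have hcast : ((m^k : ℕ) : ℝ) = M := by push_cast; rfl
  have hcastn : ((n^k : ℕ) : ℝ) = nk := by push_cast; rfl
  simp only [Dcell, Set.mem_preimage, Set.mem_Ico, hcast] at hy
  set F : ℝ := (⌊M * (a*x+b)⌋ : ℝ) with hF
  have hy1 : F ≤ M * (a*y+b) := by
    rw [div_le_iff₀ hMpos] at hy
    linarith [hy.1]
  have hy2 : M * (a*y+b) < F + 1 := by
    have h := hy.2
    rw [lt_div_iff₀ hMpos] at h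
    linarith
  have hx1 : F ≤ M * (a*x+b) := Int.floor_le _
  have hx2 : M * (a*x+b) < F + 1 := Int.lt_floor_add_one (M * (a*x+b))
  have hexp : M*((a*y+b)-(a*x+b)) = M*(a*y+b) - M*(a*x+b) := by ring
  have hMd : |M * ((a*y+b) - (a*x+b))| < 1 := by
    rw [abs_lt, hexp]
    constructor <;> linarith
  have hfactor : s - t = (nk*c/(M*a)) * (M*((a*y+b) - (a*x+b))) := by
    field_simp
    ring
  have habs : |nk*c/(M*a)| = e := by
    rw [abs_div, abs_mul, abs_mul, abs_of_pos hnkpos, abs_of_pos hMpos, he]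
    field_simp
  have hst : |s - t| < e := by
    rw [hfactor, abs_mul, habs]
    nlinarith [abs_nonneg (M*((a*y+b) - (a*x+b)))]
  have habs2 := abs_lt.mp hst
  have hfr : Int.fract t = t - (⌊t⌋:ℝ) := rfl
  simp only [Dcell, Set.mem_preimage, Set.mem_Ico, hcastn]
  constructor
  · rw [div_le_iff₀ hnkpos]
    have h6 : (⌊t⌋:ℝ) ≤ s := by linarith [habs2.1]
    linarith [h6]
  · rw [lt_div_iff₀ hnkpos]
    have h7 : s < (⌊t⌋:ℝ) + 1 := by linarith [habs2.2]
    linarith [h7]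

noncomputable def phifun (ε : ℝ) : ℝ → ℝ :=
  fun t => max 0 (1 - Metric.infDist t (Set.Icc 0 ε ∪ Set.Icc (1-ε) 1) / ε)

lemma phifun_nonneg (ε : ℝ) (t : ℝ) : 0 ≤ phifun ε t := le_max_left _ _

lemma phifun_le_one (ε : ℝ) (hε : 0 < ε) (t : ℝ) : phifun ε t ≤ 1 := by
  have h0 : 0 ≤ Metric.infDist t (Set.Icc 0 ε ∪ Set.Icc (1-ε) 1) / ε := by
    have := Metric.infDist_nonneg (s := Set.Icc 0 ε ∪ Set.Icc (1-ε) 1) (x := t)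
    positivity
  exact max_le (by norm_num) (by linarith)

noncomputable def phibcf (ε : ℝ) (hε : 0 < ε) : BoundedContinuousFunction ℝ ℝ :=
  BoundedContinuousFunction.ofNormedAddCommGroup (phifun ε)
    (continuous_const.max (continuous_const.sub
      ((Metric.continuous_infDist_pt _).div_const ε)))
    1
    (fun t => by
      rw [Real.norm_eq_abs, abs_le]
      exact ⟨by linarith [phifun_nonneg ε t], phifun_le_one ε hε t⟩)

@[simp] lemma phibcf_apply (ε : ℝ) (hε : 0 < ε) (t : ℝ) : phibcf ε hε t = phifun ε t := rfl

lemma phifun_eq_one (ε : ℝ) (t : ℝ) (ht : t ∈ Set.Icc 0 ε ∪ Set.Icc (1-ε) 1) :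
    phifun ε t = 1 := by
  unfold phifun
  rw [Metric.infDist_zero_of_mem ht]
  norm_num

lemma phifun_escape (ε : ℝ) (hε : 0 < ε) (t : ℝ) (h : phifun ε t ≠ 0) :
    ∃ s ∈ Set.Icc (0:ℝ) ε ∪ Set.Icc (1-ε) 1, dist t s < ε := by
  unfold phifun at h
  have hlt : Metric.infDist t (Set.Icc 0 ε ∪ Set.Icc (1-ε) 1) < ε := by
    by_contra hge
    push_neg at hge
    apply h
    have h2 : (1:ℝ) - Metric.infDist t (Set.Icc 0 ε ∪ Set.Icc (1-ε) 1) / ε ≤ 0 := by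
      rw [sub_nonpos, le_div_iff₀ hε]
      linarith
    simp [max_eq_left h2]
  exact (Metric.infDist_lt_iff
    ⟨(0:ℝ), Or.inl ⟨le_refl 0, le_of_lt hε⟩⟩).mp hlt

/-- Claim 6.3 of the paper.  Let `m > n > 1`, let `f, g` be
non-singular affine maps of `ℝ`, and for `k ∈ ℕ` let
`A_k = {x : f⁻¹(D_{m^k}(f x)) ⊄ g⁻¹(D_{n^k}(g x))}`.  If `μ` is a probability measure on
`[0,1]` such that `gμ` is pointwise generic under `T_n` for a continuous measure `ρ`,
then for `μ`-a.e. `x` the set of `k` with `x ∈ A_k` has density zero. -/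
theorem density_zero_of_bad_cells_affine
    (m n : ℕ) (hn : 1 < n) (hnm : n < m)
    (a b c d : ℝ) (ha : a ≠ 0) (hc : c ≠ 0)
    (f g : ℝ → ℝ) (hf : f = fun x => a * x + b) (hg : g = fun x => c * x + d)
    (A : ℕ → Set ℝ)
    (hA : ∀ k, A k = {x : ℝ | ¬ f ⁻¹' Dcell (m ^ k) (f x) ⊆ g ⁻¹' Dcell (n ^ k) (g x)})
    (μ : Measure ℝ) [IsProbabilityMeasure μ] (hμsupp : μ (Set.Icc (0:ℝ) 1)ᶜ = 0)
    (ρ : Measure ℝ) [IsProbabilityMeasure ρ] (hρcont : ∀ y : ℝ, ρ {y} = 0)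
    (hgen : PointwiseGeneric (μ.map g) (Tmap n) ρ) :
    ∀ᵐ x ∂μ, HasDensityZero {k : ℕ | x ∈ A k} := by
  classical
  subst hf hg
  have hgmeas : Measurable (fun x : ℝ => c * x + d) :=
    (measurable_id.const_mul c).add_const d
  have hgen' : ∀ᵐ x ∂μ, ∀ φ : BoundedContinuousFunction ℝ ℝ,
      Tendsto (fun N : ℕ => (1 / N : ℝ) * ∑ k ∈ Finset.range N, φ ((Tmap n)^[k] (c*x+d)))
        atTop (𝓝 (∫ y, φ y ∂ρ)) :=
    MeasureTheory.ae_of_ae_map hgmeas.aemeasurable hgen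
  filter_upwards [hgen'] with x hx
  unfold HasDensityZero
  rw [NormedAddCommGroup.tendsto_nhds_zero]
  intro δ hδ
  -- a small open set around {0,1}
  have h01 : ρ ({0,1} : Set ℝ) = 0 := by
    rw [Set.insert_eq]
    refine le_antisymm ?_ zero_le
    calc ρ ({0} ∪ {1} : Set ℝ) ≤ ρ {0} + ρ {1} := measure_union_le _ _
      _ = 0 := by rw [hρcont, hρcont]; simp
  obtain ⟨U, hUsub, hUopen, hUρ⟩ := Set.exists_isOpen_lt_of_lt ({0,1} : Set ℝ)
    (ENNReal.ofReal (δ/2)) (by rw [h01]; exact ENNReal.ofReal_pos.mpr (by linarith))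
  obtain ⟨r0, hr0, hball0⟩ := Metric.isOpen_iff.mp hUopen 0 (hUsub (by simp))
  obtain ⟨r1, hr1, hball1⟩ := Metric.isOpen_iff.mp hUopen 1 (hUsub (by simp))
  set ε : ℝ := min r0 r1 / 3 with hεdef
  have hε : 0 < ε := by
    have := lt_min hr0 hr1
    positivity
  set Φ := phibcf ε hε with hΦ
  -- pointwise bound by the indicator of U
  have hle : ∀ t, Φ t ≤ U.indicator (fun _ => (1:ℝ)) t := by
    intro t
    by_cases htU : t ∈ U
    · rw [Set.indicator_of_mem htU]
      exact phifun_le_one ε hε t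
    · rw [Set.indicator_of_notMem htU]
      by_contra hpos
      push_neg at hpos
      obtain ⟨s, hsS, hds⟩ := phifun_escape ε hε t (ne_of_gt hpos)
      apply htU
      have hε3 : 3 * ε ≤ min r0 r1 := by rw [hεdef]; linarith
      rcases hsS with hs0 | hs1
      · apply hball0
        rw [Metric.mem_ball]
        have hd0 : dist s 0 ≤ ε := by
          rw [Real.dist_eq, sub_zero, abs_of_nonneg hs0.1]
          exact hs0.2
        calc dist t 0 ≤ dist t s + dist s 0 := dist_triangle _ _ _
          _ ≤ ε + ε := by linarith
          _ < r0 := by have := min_le_left r0 r1; linarith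
      · apply hball1
        rw [Metric.mem_ball]
        have hd1 : dist s 1 ≤ ε := by
          rw [Real.dist_eq, abs_of_nonpos (by linarith [hs1.2])]
          linarith [hs1.1]
        calc dist t 1 ≤ dist t s + dist s 1 := dist_triangle _ _ _
          _ ≤ ε + ε := by linarith
          _ < r1 := by have := min_le_right r0 r1; linarith
  -- integral bound
  have hint : ∫ y, Φ y ∂ρ ≤ (ρ U).toReal := by
    have h1 : ∫ y, Φ y ∂ρ ≤ ∫ y, U.indicator (fun _ => (1:ℝ)) y ∂ρ :=
      integral_mono (Φ.integrable ρ)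
        ((integrable_const 1).indicator hUopen.measurableSet) hle
    rwa [integral_indicator_const _ hUopen.measurableSet, smul_eq_mul, mul_one] at h1
  have hLδ : ∫ y, Φ y ∂ρ < δ/2 :=
    lt_of_le_of_lt hint (ENNReal.toReal_lt_of_lt_ofReal hUρ)
  -- the cutoff k₀
  have hmpos : (0:ℝ) < (m:ℝ) := by exact_mod_cast (by omega : 0 < m)
  have hrr : Tendsto (fun k : ℕ => |c|/|a| * ((n:ℝ)^k/(m:ℝ)^k)) atTop (𝓝 0) := by
    have h1 : Tendsto (fun k : ℕ => ((n:ℝ)/(m:ℝ))^k) atTop (𝓝 0) := by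
      apply tendsto_pow_atTop_nhds_zero_of_lt_one (by positivity)
      rw [div_lt_one hmpos]
      exact_mod_cast hnm
    have h2 := h1.const_mul (|c|/|a|)
    rw [mul_zero] at h2
    apply h2.congr
    intro k
    rw [div_pow]
  obtain ⟨k₀, hk₀⟩ := eventually_atTop.mp (hrr.eventually (gt_mem_nhds hε))
  set K : ℕ := max k₀ 1 with hK
  set ψ : ℕ → ℝ := fun k => Φ ((Tmap n)^[k] (c*x+d)) with hψ
  have hψ0 : ∀ k, 0 ≤ ψ k := fun k => phifun_nonneg ε _
  -- bad k (with k ≥ K) give ψ k = 1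
  have hbad : ∀ k, K ≤ k → x ∈ A k → ψ k = 1 := by
    intro k hKk hAk
    obtain ⟨j, rfl⟩ : ∃ j, k = j + 1 := ⟨k - 1, by omega⟩
    rw [hψ]
    simp only
    rw [tmap_iterate, hΦ, phibcf_apply]
    rw [hA (j+1), Set.mem_setOf_eq] at hAk
    have hk := key_fract m n (by omega) (by omega) a b c d ha hc (j+1) x hAk
    have hek : |c|/|a| * ((n:ℝ)^(j+1)/(m:ℝ)^(j+1)) < ε := hk₀ (j+1) (by omega)
    apply phifun_eq_one
    rcases hk with hlo | hhi
    · left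
      exact ⟨Int.fract_nonneg _, le_of_lt (lt_trans hlo hek)⟩
    · right
      exact ⟨by linarith, le_of_lt (Int.fract_lt_one _)⟩
  -- counting estimate
  have hcard : ∀ N : ℕ,
      (((Finset.Icc 1 N).filter (fun k => k ∈ {k : ℕ | x ∈ A k})).card : ℝ)
      ≤ (K : ℝ) + ∑ k ∈ Finset.range (N+1), ψ k := by
    intro N
    classical
    set F := (Finset.Icc 1 N).filter (fun k => k ∈ {k : ℕ | x ∈ A k}) with hFdef
    have hsplit : (F.filter (fun k => k < K)).card
        + (F.filter (fun k => ¬ k < K)).card = F.card :=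
      Finset.card_filter_add_card_filter_not _
    have h1 : (F.filter (fun k => k < K)).card ≤ K := by
      apply le_trans (Finset.card_le_card (s := F.filter (fun k => k < K))
        (t := Finset.range K) ?_) (le_of_eq (Finset.card_range K))
      intro k hk
      rw [Finset.mem_filter] at hk
      exact Finset.mem_range.mpr hk.2
    have h2 : ((F.filter (fun k => ¬ k < K)).card : ℝ)
        ≤ ∑ k ∈ F.filter (fun k => ¬ k < K), ψ k := by
      have := Finset.card_nsmul_le_sum (F.filter (fun k => ¬ k < K)) ψ 1 ?_
      · rwa [nsmul_eq_mul, mul_one] at this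
      · intro k hk
        rw [Finset.mem_filter, hFdef, Finset.mem_filter, Set.mem_setOf_eq] at hk
        exact le_of_eq (hbad k (by omega) hk.1.2).symm
    have h3 : ∑ k ∈ F.filter (fun k => ¬ k < K), ψ k
        ≤ ∑ k ∈ Finset.range (N+1), ψ k := by
      apply Finset.sum_le_sum_of_subset_of_nonneg
      · intro k hk
        rw [Finset.mem_filter, hFdef, Finset.mem_filter, Finset.mem_Icc] at hk
        exact Finset.mem_range.mpr (by omega)
      · intro k _ _
        exact hψ0 k
    have hcast : (F.card : ℝ) = ((F.filter (fun k => k < K)).card : ℝ)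
        + ((F.filter (fun k => ¬ k < K)).card : ℝ) := by
      rw [← hsplit]; push_cast; ring
    rw [hcast]
    have h1' : ((F.filter (fun k => k < K)).card : ℝ) ≤ (K : ℝ) := by exact_mod_cast h1
    linarith
  -- the dominating sequence and its limit
  set B : ℕ → ℝ := fun N => (K : ℝ)/N
      + ((1 / ((N:ℝ)+1)) * ∑ k ∈ Finset.range (N+1), ψ k) * (((N:ℝ)+1)/N) with hB
  have havg : Tendsto (fun N : ℕ => (1 / ((N:ℝ)+1)) * ∑ k ∈ Finset.range (N+1), ψ k)
      atTop (𝓝 (∫ y, Φ y ∂ρ)) := by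
    have := (hx Φ).comp (tendsto_add_atTop_nat 1)
    apply this.congr
    intro N
    simp only [Function.comp]
    push_cast
    ring_nf
    rfl
  have hratio : Tendsto (fun N : ℕ => ((N:ℝ)+1)/N) atTop (𝓝 1) := by
    have h : Tendsto (fun N : ℕ => 1 + 1/(N:ℝ)) atTop (𝓝 (1+0)) :=
      tendsto_const_nhds.add tendsto_one_div_atTop_nhds_zero_nat
    rw [add_zero] at h
    apply h.congr'
    filter_upwards [eventually_ge_atTop 1] with N hN
    have hN0 : (N:ℝ) ≠ 0 := Nat.cast_ne_zero.mpr (by omega)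
    field_simp
  have hBlim : Tendsto B atTop (𝓝 (0 + (∫ y, Φ y ∂ρ) * 1)) :=
    (tendsto_const_div_atTop_nhds_zero_nat (K:ℝ)).add (havg.mul hratio)
  rw [zero_add, mul_one] at hBlim
  have hBlt : ∀ᶠ N in atTop, B N < δ := hBlim.eventually (gt_mem_nhds (by linarith))
  filter_upwards [eventually_ge_atTop 1, hBlt] with N hN1 hBN
  have hNpos : (0:ℝ) < (N:ℝ) := by exact_mod_cast Nat.pos_of_ne_zero (by omega)
  have hNne : (N:ℝ) ≠ 0 := ne_of_gt hNpos
  have hfrac : ((K : ℝ) + ∑ k ∈ Finset.range (N+1), ψ k) / N = B N := by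
    rw [hB]
    field_simp
  have hbound : (((Finset.Icc 1 N).filter (fun k => k ∈ {k : ℕ | x ∈ A k})).card : ℝ) / N
      ≤ B N := by
    rw [← hfrac]
    gcongr
    exact hcard N
  have hnonneg : (0:ℝ) ≤
      (((Finset.Icc 1 N).filter (fun k => k ∈ {k : ℕ | x ∈ A k})).card : ℝ) / N :=
    div_nonneg (Nat.cast_nonneg _) (le_of_lt hNpos)
  simp only [Set.mem_setOf_eq] at hbound hnonneg
  rw [Real.norm_eq_abs, abs_of_nonneg hnonneg]
  exact lt_of_le_of_lt hbound hBN
end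

section
/- Let n ≥ 2 and k ≥ 1 be integers, set x₀ = 1/(n^{2k} − 1) and x₁ = n^k/(n^{2k} − 1), regarded as points of the circle 𝕋 = ℝ/ℤ, and let α = (1/2)δ_{x₀} + (1/2)δ_{x₁}. Then {x₀, x₁} is a periodic orbit of T_{n^k} (so α is T_{n^k}-invariant), and for every integer j with 0 < 2|j| < n^k + 1, the Fourier coefficient α̂(j) = ∫ e^{2πijx} dα(x) is non-zero. -/
open MeasureTheory Filter Set Topology
open scoped ENNReal

/-- the measure `α` used in Claim 3.4 of the paper.  For integers
`n ≥ 2` and `k ≥ 1`, let `x₀ = 1/(n^{2k} − 1)` and `x₁ = n^k/(n^{2k} − 1)` on the circle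
`𝕋 = ℝ/ℤ`, and let `α = (1/2)δ_{x₀} + (1/2)δ_{x₁}`.  Then `{x₀, x₁}` is a periodic orbit
of `T_{n^k}` (so `α` is `T_{n^k}`-invariant), and for every integer `j` with
`0 < 2|j| < n^k + 1` the Fourier coefficient `α̂(j) = ∫ e^{2πijx} dα(x)` is non-zero. -/
theorem periodic_orbit_measure_fourier_nonvanishing
    (n k : ℕ) (hn : 2 ≤ n) (hk : 1 ≤ k)
    (x₀ x₁ : UnitAddCircle)
    (hx₀ : x₀ = ((1 / ((n : ℝ) ^ (2 * k) - 1) : ℝ) : UnitAddCircle))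
    (hx₁ : x₁ = (((n : ℝ) ^ k / ((n : ℝ) ^ (2 * k) - 1) : ℝ) : UnitAddCircle))
    (α : Measure UnitAddCircle)
    (hα : α = (1 / 2 : ℝ≥0∞) • Measure.dirac x₀ + (1 / 2 : ℝ≥0∞) • Measure.dirac x₁) :
    (n ^ k • x₀ = x₁ ∧ n ^ k • x₁ = x₀) ∧
    α.map (fun x : UnitAddCircle => n ^ k • x) = α ∧
    ∀ j : ℤ, j ≠ 0 → 2 * |j| < n ^ k + 1 → (∫ x, fourier j x ∂α) ≠ 0 := by
  have hnk : (2 : ℕ) ≤ n ^ k := le_trans hn (Nat.le_self_pow (by omega) n)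
  have hN : (2 : ℝ) ≤ (n : ℝ) ^ k := by exact_mod_cast hnk
  have hsq : ((n : ℝ)) ^ (2 * k) = (n : ℝ) ^ k * (n : ℝ) ^ k := by
    rw [two_mul, pow_add]
  have hD : (0 : ℝ) < (n : ℝ) ^ (2 * k) - 1 := by nlinarith
  have hD' : ((n : ℝ)) ^ (2 * k) - 1 ≠ 0 := ne_of_gt hD
  have h01 : n ^ k • x₀ = x₁ := by
    rw [hx₀, hx₁, ← QuotientAddGroup.mk_nsmul]
    congr 1
    rw [nsmul_eq_mul, mul_one_div]
    norm_num
  have h10 : n ^ k • x₁ = x₀ := by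
    rw [hx₀, hx₁, ← QuotientAddGroup.mk_nsmul]
    have he : (n ^ k : ℕ) • ((n : ℝ) ^ k / ((n : ℝ) ^ (2 * k) - 1))
        = 1 / ((n : ℝ) ^ (2 * k) - 1) + 1 := by
      rw [nsmul_eq_mul]
      push_cast
      field_simp
      nlinarith
    rw [he, QuotientAddGroup.mk_add]
    have hp : (((1 : ℝ)) : UnitAddCircle) = 0 := AddCircle.coe_period 1
    rw [hp, add_zero]
  have hc : Continuous fun x : UnitAddCircle => n ^ k • x := continuous_nsmul _
  refine ⟨⟨h01, h10⟩, ?_, ?_⟩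
  · rw [hα, Measure.map_add _ _ hc.measurable, Measure.map_smul, Measure.map_smul,
      Measure.map_dirac' hc.measurable, Measure.map_dirac' hc.measurable, h01, h10, add_comm]
  · intro j hj hjlt
    have hm : StronglyMeasurable fun x : UnitAddCircle => (fourier j x : ℂ) :=
      (map_continuous (fourier j)).stronglyMeasurable
    have h0 : ∀ y : UnitAddCircle, Integrable (fun x => (fourier j x : ℂ)) (Measure.dirac y) := by
      intro y
      refine ⟨hm.aestronglyMeasurable, ?_⟩
      simp [HasFiniteIntegral, lintegral_dirac]
    have h0' : ∀ y : UnitAddCircle,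
        Integrable (fun x => (fourier j x : ℂ)) ((1 / 2 : ℝ≥0∞) • Measure.dirac y) := fun y =>
      (integrable_smul_measure (by norm_num) (by norm_num)).2 (h0 y)
    rw [hα, integral_add_measure (h0' x₀) (h0' x₁), integral_smul_measure, integral_smul_measure,
      integral_dirac, integral_dirac]
    have htor : ((1 / 2 : ℝ≥0∞)).toReal = (1 / 2 : ℝ) := by norm_num
    rw [htor]
    intro hsum
    rw [hx₀, hx₁, fourier_coe_apply, fourier_coe_apply] at hsum
    set D : ℝ := (n : ℝ) ^ (2 * k) - 1 with hDdef
    set N : ℝ := (n : ℝ) ^ k with hNdef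
    have h2 : (1 / 2 : ℝ) ≠ 0 := by norm_num
    field_simp at hsum
    -- hsum : exp (2πIj/D) + exp (2πIjN/D) = 0
    have hDC : ((D : ℝ) : ℂ) ≠ 0 := Complex.ofReal_ne_zero.mpr hD'
    have hNC1 : ((N : ℝ) : ℂ) + 1 ≠ 0 := by
      intro h
      have : (N : ℝ) + 1 = 0 := by exact_mod_cast h
      nlinarith
    have hfac : ((D : ℝ) : ℂ) = ((N : ℝ) : ℂ) * ((N : ℝ) : ℂ) - 1 := by
      rw [hDdef, hsq]; push_cast; ring
    have hE : Complex.exp (2 * (Real.pi : ℂ) * Complex.I * j / (((N : ℝ) : ℂ) + 1)) = -1 := by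
      have hx : (2 * (Real.pi : ℂ) * Complex.I * j / (((N : ℝ) : ℂ) + 1))
          = (2 * (Real.pi : ℂ) * Complex.I * j * N / D) - (2 * (Real.pi : ℂ) * Complex.I * j / D) := by
        rw [← sub_div, eq_div_iff hDC, div_mul_eq_mul_div, div_eq_iff hNC1, hfac]
        ring
      rw [hx, Complex.exp_sub]
      have hne := Complex.exp_ne_zero (2 * (Real.pi : ℂ) * Complex.I * j / D)
      have h3 : Complex.exp (2 * (Real.pi : ℂ) * Complex.I * j * N / D)
          = - Complex.exp (2 * (Real.pi : ℂ) * Complex.I * j / D) := by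
        simp only [Complex.real_smul, Complex.ofReal_div, Complex.ofReal_one, div_one, mul_one_div,
          ← mul_div_assoc, Complex.ofReal_ofNat, mul_one] at hsum
        linear_combination 2 * hsum
      rw [h3, neg_div, div_self hne]
    have hE1 : Complex.exp (2 * (Real.pi : ℂ) * Complex.I * j / (((N : ℝ) : ℂ) + 1)
        - (Real.pi : ℂ) * Complex.I) = 1 := by
      rw [Complex.exp_sub, hE, Complex.exp_pi_mul_I]
      norm_num
    rw [Complex.exp_eq_one_iff] at hE1
    obtain ⟨m, hm'⟩ := hE1
    have hpi : ((Real.pi : ℂ)) ≠ 0 := Complex.ofReal_ne_zero.mpr Real.pi_ne_zero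
    have hπI : (Real.pi : ℂ) * Complex.I ≠ 0 := mul_ne_zero hpi Complex.I_ne_zero
    have hZ : 2 * (j : ℂ) = (2 * m + 1) * (((N : ℝ) : ℂ) + 1) := by
      field_simp at hm'
      have h4 : (Real.pi : ℂ) * Complex.I
          * (2 * (j : ℂ) - (2 * m + 1) * (((N : ℝ) : ℂ) + 1)) = 0 := by
        linear_combination (Real.pi : ℂ) * Complex.I * hm'
      have h5 := (mul_eq_zero.mp h4).resolve_left hπI
      linear_combination h5
    have hZint : 2 * j = (2 * m + 1) * ((n : ℤ) ^ k + 1) := by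
      rw [hNdef] at hZ
      exact_mod_cast hZ
    have habs : (1 : ℤ) ≤ |2 * m + 1| := Int.one_le_abs (by omega)
    have hnkZ : (0 : ℤ) ≤ (n : ℤ) ^ k := by positivity
    have hja : |2 * j| = |2 * m + 1| * ((n : ℤ) ^ k + 1) := by
      rw [hZint, abs_mul, abs_of_nonneg (by positivity : (0:ℤ) ≤ (n : ℤ) ^ k + 1)]
    have hja2 : |2 * j| = 2 * |j| := by rw [abs_mul]; norm_num
    have h6 : (n : ℤ) ^ k + 1 ≤ |2 * m + 1| * ((n : ℤ) ^ k + 1) :=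
      le_mul_of_one_le_left (by positivity) habs
    linarith [hja, hja2, hjlt, h6]
end

section
/- Let m ≥ 2 be an integer and let β be the Cantor–Lebesgue measure in base m with weights (1/3, 2/3), i.e. the law of the random sum ∑_{k=1}^∞ X_k·m^{-k} where (X_k) are i.i.d. random variables with P(X_k = 0) = 1/3 and P(X_k = 1) = 2/3, regarded as a Borel probability measure on the circle 𝕋 = ℝ/ℤ. Then for every integer i, the Fourier coefficient β̂(i) = ∫ e^{2πiix} dβ(x) is non-zero. -/
open MeasureTheory Filter Set Topology ProbabilityTheory
open scoped ENNReal

private lemma aux_one_sub_sum_le_prod (δ : ℕ → ℝ) (h0 : ∀ k, 0 ≤ δ k) :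
    ∀ s : Finset ℕ, (∀ k ∈ s, δ k ≤ 1) → 1 - ∑ k ∈ s, δ k ≤ ∏ k ∈ s, (1 - δ k) := by
  intro s
  induction s using Finset.induction with
  | empty => simp
  | @insert a s ha ih =>
    intro h1
    rw [Finset.sum_insert ha, Finset.prod_insert ha]
    have hP := ih (fun k hk => h1 k (Finset.mem_insert_of_mem hk))
    have ha1 : δ a ≤ 1 := h1 a (Finset.mem_insert_self a s)
    have hSig : 0 ≤ ∑ k ∈ s, δ k := Finset.sum_nonneg fun k _ => h0 k
    nlinarith [h0 a]

private lemma aux_geom_Ico (N : ℕ) :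
    ∀ n, ∑ k ∈ Finset.Ico N n, ((1:ℝ)/2) ^ (k+1) ≤ (1/2) ^ N := by
  intro n
  rcases le_or_gt N n with h | h
  · have key : ∀ n, N ≤ n → ∑ k ∈ Finset.Ico N n, ((1:ℝ)/2) ^ (k+1) = (1/2)^N - (1/2)^n := by
      intro n hn
      induction n, hn using Nat.le_induction with
      | base => simp
      | succ n hn ih =>
        rw [Finset.sum_Ico_succ_top hn, ih]
        ring
    rw [key n h]
    have : (0:ℝ) ≤ (1/2)^n := by positivity
    linarith
  · rw [Finset.Ico_eq_empty (by omega)]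
    simp only [Finset.sum_empty]
    positivity

set_option maxHeartbeats 1000000 in
/-- Let `m ≥ 2` and let `β` be the Cantor–Lebesgue measure in base `m`
with weights `(1/3, 2/3)`, i.e. the law (on the circle `𝕋 = ℝ/ℤ`) of the random sum
`∑_{k≥1} X_k m^{-k}` for i.i.d. digits `X_k` with `P(X_k = 0) = 1/3`, `P(X_k = 1) = 2/3`.
Then every Fourier coefficient `β̂(i) = ∫ e^{2πiix} dβ(x)` is non-zero. -/
theorem cantor_lebesgue_fourier_nonvanishing
    (m : ℕ) (hm : 2 ≤ m)
    (Ω : Type) [MeasurableSpace Ω] (μΩ : Measure Ω) [IsProbabilityMeasure μΩ]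
    (X : ℕ → Ω → ℝ) (hXmeas : ∀ k, Measurable (X k))
    (hXindep : iIndepFun X μΩ)
    (hXdist : ∀ k, μΩ.map (X k) =
      (1 / 3 : ℝ≥0∞) • Measure.dirac (0 : ℝ) + (2 / 3 : ℝ≥0∞) • Measure.dirac (1 : ℝ))
    (β : Measure UnitAddCircle)
    (hβ : β = μΩ.map (fun ω => ((∑' k : ℕ, X k ω / (m : ℝ) ^ (k + 1) : ℝ) : UnitAddCircle))) :
    ∀ i : ℤ, (∫ x, fourier i x ∂β) ≠ 0 := by
  intro i
  have hm2 : (2:ℝ) ≤ (m:ℝ) := by exact_mod_cast hm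
  have hmpos : (0:ℝ) < (m:ℝ) := by linarith
  set π := Real.pi with hπ
  -- digits are a.e. in {0, 1}
  have hae : ∀ᵐ ω ∂μΩ, ∀ k, X k ω = 0 ∨ X k ω = 1 := by
    rw [MeasureTheory.ae_all_iff]
    intro k
    have hs : MeasurableSet {x : ℝ | ¬(x = 0 ∨ x = 1)} := by
      have : {x : ℝ | ¬(x = 0 ∨ x = 1)} = ({0, 1} : Set ℝ)ᶜ := by
        ext x; simp [Set.mem_insert_iff]
      rw [this]
      exact (measurableSet_insert.mpr (measurableSet_singleton 1)).compl
    have hmap := Measure.map_apply (μ := μΩ) (hXmeas k) hs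
    rw [hXdist k] at hmap
    have h0 : (0:ℝ) ∉ {x : ℝ | ¬(x = 0 ∨ x = 1)} := by simp
    have h1 : (1:ℝ) ∉ {x : ℝ | ¬(x = 0 ∨ x = 1)} := by simp
    show μΩ (X k ⁻¹' {x : ℝ | ¬(x = 0 ∨ x = 1)}) = 0
    rw [← hmap]
    simp [Measure.add_apply, Measure.smul_apply, Measure.dirac_apply' _ hs,
      Set.indicator_of_notMem h0, Set.indicator_of_notMem h1]
  -- summability of the series for good ω
  have hsum : ∀ ω, (∀ k, X k ω = 0 ∨ X k ω = 1) →
      Summable (fun k : ℕ => X k ω / (m:ℝ) ^ (k+1)) := by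
    intro ω hω
    have hinv : ((m:ℝ))⁻¹ < 1 := by
      rw [inv_lt_one₀ hmpos]; linarith
    have hg : Summable (fun k : ℕ => ((m:ℝ)⁻¹)^(k+1)) := by
      simpa only [← pow_succ'] using
        (summable_geometric_of_lt_one (by positivity) hinv).mul_left ((m:ℝ)⁻¹)
    apply Summable.of_nonneg_of_le (fun k => ?_) (fun k => ?_) hg
    · rcases hω k with h|h <;> rw [h] <;> positivity
    · rw [inv_pow, ← one_div]
      have h1 : X k ω ≤ 1 := by rcases hω k with h|h <;> rw [h] <;> norm_num
      gcongr
  -- the factor functions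
  set Y : ℕ → Ω → ℂ := fun k ω => Complex.exp
      (2 * ↑π * Complex.I * (i:ℂ) * ((X k ω / (m:ℝ) ^ (k+1) : ℝ) : ℂ)) with hY
  set θ : ℕ → ℝ := fun k => 2 * π * (i:ℝ) / (m:ℝ) ^ (k+1) with hθ
  set c : ℕ → ℂ := fun k => (1/3 : ℂ) + (2/3) * Complex.exp ((θ k : ℝ) * Complex.I) with hc
  have hYmeas : ∀ k, Measurable (Y k) := by
    intro k
    apply Complex.continuous_exp.measurable.comp
    exact (Complex.measurable_ofReal.comp ((hXmeas k).div_const _)).const_mul _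
  have hF : ∀ (n:ℕ) (ω:Ω),
      (fourier i ((↑(∑ k ∈ Finset.range n, X k ω / (m:ℝ)^(k+1)) : UnitAddCircle)) : ℂ)
      = ∏ k ∈ Finset.range n, Y k ω := by
    intro n ω
    rw [fourier_coe_apply]
    rw [Complex.ofReal_one, div_one, Complex.ofReal_sum, Finset.mul_sum, Complex.exp_sum]
  have hYindep : iIndepFun Y μΩ := by
    have := hXindep.comp
      (fun k (t : ℝ) => Complex.exp (2 * ↑π * Complex.I * (i:ℂ) * ((t / (m:ℝ) ^ (k+1) : ℝ) : ℂ)))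
      (fun k => Complex.continuous_exp.measurable.comp
        ((Complex.measurable_ofReal.comp (measurable_id.div_const _)).const_mul _))
    exact this
  have hprodint : ∀ n, ∫ ω, ∏ k ∈ Finset.range n, Y k ω ∂μΩ
      = ∏ k ∈ Finset.range n, ∫ ω, Y k ω ∂μΩ := by
    intro n
    induction n with
    | zero => simp
    | succ n ih =>
      have hprob : IsProbabilityMeasure (μΩ.map (Y n)) :=
        Measure.isProbabilityMeasure_map (hYmeas n).aemeasurable
      set P : Ω → ℂ := fun ω => ∏ j ∈ Finset.range n, Y j ω with hP
      have hPm : Measurable P := Finset.measurable_prod _ fun j _ => hYmeas j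
      have hPP : (∏ j ∈ Finset.range n, Y j) = P := by
        funext ω; simp [Finset.prod_apply, hP]
      have hIF : IndepFun P (Y n) μΩ := hPP ▸ hYindep.indepFun_prod_range_succ hYmeas n
      have hmap : μΩ.map (fun ω => (P ω, Y n ω)) = (μΩ.map P).prod (μΩ.map (Y n)) :=
        (indepFun_iff_map_prod_eq_prod_map_map hPm.aemeasurable (hYmeas n).aemeasurable).1 hIF
      have hmul : ∫ ω, P ω * Y n ω ∂μΩ = (∫ ω, P ω ∂μΩ) * ∫ ω, Y n ω ∂μΩ := by
        have h1 : ∫ ω, P ω * Y n ω ∂μΩ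
            = ∫ z : ℂ × ℂ, z.1 * z.2 ∂(μΩ.map (fun ω => (P ω, Y n ω))) :=
          (integral_map ((hPm.prodMk (hYmeas n)).aemeasurable)
            (measurable_fst.mul measurable_snd).aestronglyMeasurable).symm
        have h2 : ∫ ω, P ω ∂μΩ = ∫ x : ℂ, x ∂(μΩ.map P) :=
          (integral_map hPm.aemeasurable aestronglyMeasurable_id).symm
        have h3 : ∫ ω, Y n ω ∂μΩ = ∫ x : ℂ, x ∂(μΩ.map (Y n)) :=
          (integral_map (hYmeas n).aemeasurable aestronglyMeasurable_id).symm
        rw [h1, hmap, h2, h3]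
        exact integral_prod_mul (fun x : ℂ => x) (fun y : ℂ => y)
      calc ∫ ω, ∏ k ∈ Finset.range (n+1), Y k ω ∂μΩ
          = ∫ ω, P ω * Y n ω ∂μΩ := by
            apply integral_congr_ae
            filter_upwards with ω
            rw [Finset.prod_range_succ]
        _ = (∫ ω, P ω ∂μΩ) * ∫ ω, Y n ω ∂μΩ := hmul
        _ = ∏ k ∈ Finset.range (n+1), ∫ ω, Y k ω ∂μΩ := by
            rw [Finset.prod_range_succ, ← ih]
  have hEY : ∀ k, ∫ ω, Y k ω ∂μΩ = c k := by
    intro k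
    have hgm : Measurable (fun t : ℝ => Complex.exp
      (2 * ↑π * Complex.I * (i:ℂ) * ((t / (m:ℝ) ^ (k+1) : ℝ) : ℂ))) :=
      Complex.continuous_exp.measurable.comp
        ((Complex.measurable_ofReal.comp (measurable_id.div_const _)).const_mul _)
    have h1 : ∫ ω, Y k ω ∂μΩ = ∫ t, Complex.exp
        (2 * ↑π * Complex.I * (i:ℂ) * ((t / (m:ℝ) ^ (k+1) : ℝ) : ℂ)) ∂(μΩ.map (X k)) :=
      (integral_map (hXmeas k).aemeasurable hgm.aestronglyMeasurable).symm
    have hid : ∀ a : ℝ, Integrable (fun t : ℝ => Complex.exp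
        (2 * ↑π * Complex.I * (i:ℂ) * ((t / (m:ℝ) ^ (k+1) : ℝ) : ℂ))) (Measure.dirac a) :=
      fun a => (integrable_const _).congr (ae_eq_dirac _).symm
    rw [h1, hXdist k,
      integral_add_measure ((hid 0).smul_measure (ENNReal.div_lt_top (by norm_num) (by norm_num)).ne)
        ((hid 1).smul_measure (ENNReal.div_lt_top (by norm_num) (by norm_num)).ne),
      integral_smul_measure, integral_smul_measure, integral_dirac, integral_dirac]
    have hg0 : Complex.exp
        (2 * ↑π * Complex.I * (i:ℂ) * (((0:ℝ) / (m:ℝ) ^ (k+1) : ℝ) : ℂ)) = 1 := by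
      norm_num
    have hg1 : Complex.exp
        (2 * ↑π * Complex.I * (i:ℂ) * (((1:ℝ) / (m:ℝ) ^ (k+1) : ℝ) : ℂ))
        = Complex.exp ((θ k : ℝ) * Complex.I) := by
      congr 1
      rw [hθ]
      push_cast
      ring
    rw [hg0, hg1, hc]
    have ht1 : ((1/3 : ℝ≥0∞)).toReal = 1/3 := by
      rw [ENNReal.toReal_div]; norm_num
    have ht2 : ((2/3 : ℝ≥0∞)).toReal = 2/3 := by
      rw [ENNReal.toReal_div]; norm_num
    rw [ht1, ht2]
    simp only [Complex.real_smul]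
    push_cast
    ring
  have hmk : Measurable (fun x : ℝ => (x : UnitAddCircle)) := AddCircle.measurable_mk'
  have hSnm : ∀ n, Measurable (fun ω => ∑ k ∈ Finset.range n, X k ω / (m:ℝ)^(k+1)) :=
    fun n => Finset.measurable_sum _ fun k _ => (hXmeas k).div_const _
  have hnf : ∀ x : UnitAddCircle, ‖fourier i x‖ = 1 := fun x => Circle.norm_coe _
  have hSmeas : AEMeasurable
      (fun ω => ((∑' k, X k ω / (m:ℝ)^(k+1) : ℝ) : UnitAddCircle)) μΩ := by
    apply aemeasurable_of_tendsto_metrizable_ae atTop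
      (fun n => (hmk.comp (hSnm n)).aemeasurable)
    filter_upwards [hae] with ω hω
    exact (continuous_quotient_mk'.tendsto _).comp ((hsum ω hω).hasSum.tendsto_sum_nat)
  have hβi : ∫ x, fourier i x ∂β
      = ∫ ω, (fourier i ((↑(∑' k, X k ω / (m:ℝ)^(k+1)) : UnitAddCircle)) : ℂ) ∂μΩ := by
    rw [hβ, integral_map hSmeas (map_continuous (fourier i)).aestronglyMeasurable]
  have hDCT : Tendsto (fun n => ∏ k ∈ Finset.range n, c k) atTop
      (𝓝 (∫ x, fourier i x ∂β)) := by
    rw [hβi]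
    have hd := tendsto_integral_of_dominated_convergence (μ := μΩ)
      (F := fun n ω => (fourier i
        ((↑(∑ k ∈ Finset.range n, X k ω / (m:ℝ)^(k+1)) : UnitAddCircle)) : ℂ))
      (f := fun ω => (fourier i ((↑(∑' k, X k ω / (m:ℝ)^(k+1)) : UnitAddCircle)) : ℂ))
      (bound := fun _ => 1)
      (fun n => ((map_continuous (fourier i)).measurable.comp
        (hmk.comp (hSnm n))).aestronglyMeasurable)
      (integrable_const 1)
      (fun n => Filter.Eventually.of_forall fun ω => le_of_eq (hnf _))
      (by
        filter_upwards [hae] with ω hω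
        exact ((map_continuous (fourier i)).tendsto _).comp
          ((continuous_quotient_mk'.tendsto _).comp ((hsum ω hω).hasSum.tendsto_sum_nat)))
    have heq : (fun n => ∫ ω, (fourier i
        ((↑(∑ k ∈ Finset.range n, X k ω / (m:ℝ)^(k+1)) : UnitAddCircle)) : ℂ) ∂μΩ)
        = fun n => ∏ k ∈ Finset.range n, c k := by
      funext n
      calc ∫ ω, (fourier i
          ((↑(∑ k ∈ Finset.range n, X k ω / (m:ℝ)^(k+1)) : UnitAddCircle)) : ℂ) ∂μΩ
          = ∫ ω, ∏ k ∈ Finset.range n, Y k ω ∂μΩ := by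
            apply integral_congr_ae
            filter_upwards with ω
            exact hF n ω
        _ = ∏ k ∈ Finset.range n, ∫ ω, Y k ω ∂μΩ := hprodint n
        _ = ∏ k ∈ Finset.range n, c k := Finset.prod_congr rfl fun k _ => hEY k
    rwa [heq] at hd
  -- norm estimates for the factors
  have hπpos : 0 < π := Real.pi_pos
  have hne : ∀ k, ‖Complex.exp ((θ k : ℝ) * Complex.I)‖ = 1 := fun k => by
    rw [Complex.norm_exp_ofReal_mul_I]
  have h23n : ‖(2/3 : ℂ)‖ = 2/3 := by
    rw [show (2/3 : ℂ) = ((2/3 : ℝ) : ℂ) by norm_num, Complex.norm_real]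
    norm_num
  have h13n : ‖(1/3 : ℂ)‖ = 1/3 := by
    rw [show (1/3 : ℂ) = ((1/3 : ℝ) : ℂ) by norm_num, Complex.norm_real]
    norm_num
  have hclow : ∀ k, 1/3 ≤ ‖c k‖ := by
    intro k
    have h := norm_sub_norm_le ((2/3 : ℂ) * Complex.exp ((θ k : ℝ) * Complex.I)) (-(1/3 : ℂ))
    have he : (2/3 : ℂ) * Complex.exp ((θ k : ℝ) * Complex.I) - (-(1/3 : ℂ)) = c k := by
      rw [hc]; ring
    rw [he, norm_mul, hne k, norm_neg, h13n, h23n] at h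
    linarith
  have hδbound : ∀ k, |θ k| ≤ 1 → ‖c k - 1‖ ≤ (4/3) * |θ k| := by
    intro k hk
    have he : c k - 1 = (2/3 : ℂ) * (Complex.exp ((θ k : ℝ) * Complex.I) - 1) := by
      rw [hc]; ring
    rw [he, norm_mul, h23n]
    have habs : ‖((θ k : ℝ) : ℂ) * Complex.I‖ = |θ k| := by
      rw [norm_mul, Complex.norm_I, Complex.norm_real, Real.norm_eq_abs, mul_one]
    have h2 := Complex.norm_exp_sub_one_le (x := (θ k : ℝ) * Complex.I) (by rw [habs]; exact hk)
    rw [habs] at h2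
    nlinarith [norm_nonneg (Complex.exp ((θ k : ℝ) * Complex.I) - 1)]
  set C : ℝ := 2 * π * (|(i:ℝ)| + 1) with hC
  have hCpos : 0 < C := by positivity
  have hθb : ∀ k, |θ k| ≤ C * (1/2)^(k+1) := by
    intro k
    have hpow : (2:ℝ)^(k+1) ≤ (m:ℝ)^(k+1) := pow_le_pow_left₀ (by norm_num) hm2 _
    have h2pos : (0:ℝ) < (2:ℝ)^(k+1) := by positivity
    have hmpow : (0:ℝ) < (m:ℝ)^(k+1) := by positivity
    have h1 : |θ k| = 2*π*|(i:ℝ)| / (m:ℝ)^(k+1) := by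
      rw [hθ]
      rw [abs_div, abs_mul, abs_of_pos (by positivity : (0:ℝ) < 2*π),
        abs_of_pos hmpow]
    rw [h1]
    calc 2*π*|(i:ℝ)| / (m:ℝ)^(k+1) ≤ 2*π*(|(i:ℝ)|+1) / (2:ℝ)^(k+1) := by
          gcongr
          linarith [abs_nonneg ((i:ℝ))]
      _ = C * (1/2)^(k+1) := by
          rw [div_pow, one_pow, mul_one_div, hC]
  obtain ⟨N, hN⟩ := exists_pow_lt_of_lt_one
    (show (0:ℝ) < 1/(4*(C+1)) by positivity) (show (1/2:ℝ) < 1 by norm_num)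
  have hCN : C * (1/2)^N ≤ 1/4 := by
    have h1 : C * (1/2)^N ≤ C * (1/(4*(C+1))) :=
      mul_le_mul_of_nonneg_left hN.le hCpos.le
    have h2 : C * (1/(4*(C+1))) ≤ 1/4 := by
      rw [mul_one_div, div_le_div_iff₀ (by positivity) (by norm_num)]
      nlinarith
    linarith
  set δ : ℕ → ℝ := fun k => (4/3*C) * (1/2)^(k+1) with hδ
  have hδ0 : ∀ k, 0 ≤ δ k := fun k => by rw [hδ]; positivity
  have hδk : ∀ k, N ≤ k → ‖c k - 1‖ ≤ δ k ∧ δ k ≤ 1/2 := by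
    intro k hk
    have hmono : (1/2:ℝ)^(k+1) ≤ (1/2)^N :=
      pow_le_pow_of_le_one (by norm_num) (by norm_num) (by omega)
    have hsmall : C * (1/2)^(k+1) ≤ 1/4 := by
      have := mul_le_mul_of_nonneg_left hmono hCpos.le
      linarith
    constructor
    · have h1 : |θ k| ≤ 1 := le_trans (hθb k) (by linarith)
      refine le_trans (hδbound k h1) ?_
      have := hθb k
      rw [hδ]
      nlinarith
    · rw [hδ]; linarith
  have hlow : ∀ n, N ≤ n → (1/3:ℝ)^N * (1/2) ≤ ‖∏ k ∈ Finset.range n, c k‖ := by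
    intro n hn
    rw [← Finset.prod_range_mul_prod_Ico _ hn, norm_mul, norm_prod, norm_prod]
    have hA : (1/3:ℝ)^N ≤ ∏ k ∈ Finset.range N, ‖c k‖ := by
      calc (1/3:ℝ)^N = ∏ _k ∈ Finset.range N, (1/3:ℝ) := by
            rw [Finset.prod_const, Finset.card_range]
        _ ≤ ∏ k ∈ Finset.range N, ‖c k‖ :=
            Finset.prod_le_prod (fun k _ => by norm_num) (fun k _ => hclow k)
    have hB : (1/2:ℝ) ≤ ∏ k ∈ Finset.Ico N n, ‖c k‖ := by
      have hB1 : ∏ k ∈ Finset.Ico N n, (1 - δ k) ≤ ∏ k ∈ Finset.Ico N n, ‖c k‖ := by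
        apply Finset.prod_le_prod
        · intro k hk
          have := hδk k (Finset.mem_Ico.1 hk).1
          linarith [this.2]
        · intro k hk
          have hk' := hδk k (Finset.mem_Ico.1 hk).1
          have h2 : ‖(1:ℂ)‖ - ‖(1:ℂ) - c k‖ ≤ ‖c k‖ := by
            have := norm_sub_norm_le (1:ℂ) ((1:ℂ) - c k)
            simpa using this
          rw [norm_one, norm_sub_rev] at h2
          linarith [hk'.1]
      have hB2 : 1 - ∑ k ∈ Finset.Ico N n, δ k ≤ ∏ k ∈ Finset.Ico N n, (1 - δ k) :=
        aux_one_sub_sum_le_prod δ hδ0 _ (fun k hk => by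
          linarith [(hδk k (Finset.mem_Ico.1 hk).1).2])
      have hB3 : ∑ k ∈ Finset.Ico N n, δ k ≤ 1/2 := by
        have h1 : ∑ k ∈ Finset.Ico N n, δ k
            = (4/3*C) * ∑ k ∈ Finset.Ico N n, (1/2:ℝ)^(k+1) := by
          rw [Finset.mul_sum]
        rw [h1]
        have h2 := aux_geom_Ico N n
        have h3 : (4/3*C) * ∑ k ∈ Finset.Ico N n, (1/2:ℝ)^(k+1) ≤ (4/3*C) * (1/2)^N :=
          mul_le_mul_of_nonneg_left h2 (by positivity)
        nlinarith
      linarith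
    calc (1/3:ℝ)^N * (1/2)
        ≤ (∏ k ∈ Finset.range N, ‖c k‖) * ∏ k ∈ Finset.Ico N n, ‖c k‖ := by
          apply mul_le_mul hA hB (by norm_num)
          exact Finset.prod_nonneg fun k _ => norm_nonneg _
      _ = _ := rfl
  intro h0
  rw [h0] at hDCT
  have hge := ge_of_tendsto hDCT.norm
    (eventually_atTop.2 ⟨N, fun n hn => hlow n hn⟩)
  rw [norm_zero] at hge
  have : (0:ℝ) < (1/3:ℝ)^N * (1/2) := by positivity
  linarith
end
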